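/- Let μ ∈ M(𝕋^d) and let Λ ⊂ ℤ^d be a finite subset, and suppose Γ(μ,Λ) has at least two elements. For each distinct pair m, n ∈ Γ, define α_{m,n} ∈ ℝ/ℤ by e^{2πi α_{m,n}} = μ̂(m)/μ̂(n), and set S = ∩_{m,n ∈ Γ, m ≠ n} {x ∈ 𝕋^d : x·(m−n) + α_{m,n} ∈ ℤ}, an intersection of C(#Γ,2) families of periodic hyperplanes. Then every minimal extrapolation ν ∈ 𝓔(μ,Λ) is a singular measure supported in the closed set S. In particular, if d = 1, then S is a finite set of points and every minimal extrapolation is a discrete measure supported in S. -/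

import Mathlib

/- Setting: `M(𝕋^d)`, the space of complex bounded Radon measures on the `d`-dimensional
torus, is identified with the continuous dual of `C(𝕋^d, ℂ)` via the Riesz representation
theorem; the total variation norm corresponds to the operator norm. -/

open MeasureTheory Complex Real

noncomputable section

theorem Real.fact_zero_lt_one : Fact ((0 : ℝ) < 1) := ⟨one_pos⟩

attribute [local instance] Real.fact_zero_lt_one

/-- The `d`-dimensional torus `𝕋^d = (ℝ/ℤ)^d`. -/
abbrev Torus (d : ℕ) : Type := Fin d → AddCircle (1 : ℝ)

/-- The character `x ↦ e^{2πi m·x}` on the torus, for `m ∈ ℤ^d`. -/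
def torusChar {d : ℕ} (m : Fin d → ℤ) : C(Torus d, ℂ) :=
  ⟨fun x => ∏ i, fourier (m i) (x i), by
    refine continuous_finsetProd _ fun i _ => ?_
    exact (map_continuous (fourier (m i))).comp (continuous_apply i)⟩

/-- The space `M(𝕋^d)` of complex bounded Radon measures on the torus, identified (via the
Riesz representation theorem) with the continuous dual of `C(𝕋^d, ℂ)`; the total variation
norm is the operator norm. -/
abbrev TorusMeasure (d : ℕ) : Type := C(Torus d, ℂ) →L[ℂ] ℂ

/-- The Fourier coefficient `μ̂(m) = ∫_{𝕋^d} e^{-2πi m·x} dμ(x)`. -/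
def mFourierCoeff {d : ℕ} (μ : TorusMeasure d) (m : Fin d → ℤ) : ℂ :=
  μ (torusChar (-m))

/-- `ν` is an extrapolation of `μ` from `Λ` if `ν̂ = μ̂` on `Λ`. -/
def IsExtrapolation {d : ℕ} (μ : TorusMeasure d) (Λ : Finset (Fin d → ℤ))
    (ν : TorusMeasure d) : Prop :=
  ∀ m ∈ Λ, mFourierCoeff ν m = mFourierCoeff μ m

/-- `ε(μ,Λ) = inf {‖σ‖ : σ ∈ M(𝕋^d), σ̂ = μ̂ on Λ}`. -/
def minExtNorm {d : ℕ} (μ : TorusMeasure d) (Λ : Finset (Fin d → ℤ)) : ℝ :=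
  sInf ((fun ν => ‖ν‖) '' {ν | IsExtrapolation μ Λ ν})

/-- `ν` is a minimal extrapolation of `μ` from `Λ`, i.e. `ν ∈ 𝓔(μ,Λ)`:
an extrapolation whose total variation norm equals `ε(μ,Λ)`. -/
def IsMinimalExtrapolation {d : ℕ} (μ : TorusMeasure d) (Λ : Finset (Fin d → ℤ))
    (ν : TorusMeasure d) : Prop :=
  IsExtrapolation μ Λ ν ∧ ‖ν‖ = minExtNorm μ Λ

/-- `Γ(μ,Λ) = {m ∈ Λ : |μ̂(m)| = ε(μ,Λ)}`. -/
def gammaSet {d : ℕ} (μ : TorusMeasure d) (Λ : Finset (Fin d → ℤ)) : Set (Fin d → ℤ) :=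
  {m | m ∈ Λ ∧ ‖mFourierCoeff μ m‖ = minExtNorm μ Λ}

/-- The measure `ν` is supported in the set `S`: it annihilates every continuous
function vanishing on `S` (for closed `S` this says `supp(ν) ⊆ S`). -/
def SupportedIn {d : ℕ} (ν : TorusMeasure d) (S : Set (Torus d)) : Prop :=
  ∀ f : C(Torus d, ℂ), (∀ x ∈ S, f x = 0) → ν f = 0

/-- The pairing `⟨f,μ⟩ = ∫_{𝕋^d} f(x) conj(dμ(x)) = conj (μ (conj f))`. -/
def mPairing {d : ℕ} (f : C(Torus d, ℂ)) (μ : TorusMeasure d) : ℂ :=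
  starRingEnd ℂ (μ (star f))

/-- `C(𝕋^d;Λ)`: the subspace of trigonometric polynomials
`f(x) = ∑_{m ∈ Λ} a_m e^{2πi m·x}` with frequencies in `Λ`. -/
def trigPoly {d : ℕ} (Λ : Finset (Fin d → ℤ)) : Submodule ℂ C(Torus d, ℂ) :=
  Submodule.span ℂ (torusChar '' (Λ : Set (Fin d → ℤ)))

/-- For a continuous `g` with `‖g‖_∞ ≤ 1`, the assertion that `sign(ν) = g`
`ν`-almost everywhere, expressed through the standard equivalent condition
`⟨g,ν⟩ = ‖ν‖` (obtained by integrating the Radon–Nikodym identity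
`∫ f d|ν| = ∫ f conj(sign ν) dν` against `f = conj g` and using `|ν|(𝕋^d) = ‖ν‖`). -/
def SignEqAE {d : ℕ} (ν : TorusMeasure d) (g : C(Torus d, ℂ)) : Prop :=
  mPairing g ν = (‖ν‖ : ℂ)

/-- `ν` is a positive measure: it takes nonnegative real values on nonnegative real-valued
continuous functions. -/
def IsPositiveMeasure {d : ℕ} (ν : TorusMeasure d) : Prop :=
  ∀ f : C(Torus d, ℂ), (∀ x, (f x).im = 0 ∧ 0 ≤ (f x).re) → (ν f).im = 0 ∧ 0 ≤ (ν f).re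

/-- The Dirac measure `δ_x`: evaluation at `x`. -/
def diracM {d : ℕ} (x : Torus d) : TorusMeasure d :=
  ContinuousMap.evalCLM ℂ x

/-- The modulation `M_n ν`, defined by `d(M_n ν)(x) = e^{2πi n·x} dν(x)`. -/
def modulateM {d : ℕ} (n : Fin d → ℤ) (ν : TorusMeasure d) : TorusMeasure d :=
  ν.comp (ContinuousLinearMap.mul ℂ C(Torus d, ℂ) (torusChar n))

/-- The intersection `S` of the `(#Γ choose 2)` families of periodic hyperplanes
`{x ∈ 𝕋^d : x·(m−n) + α_{m,n} ∈ ℤ}`, over distinct pairs `m, n ∈ Γ(μ,Λ)`. -/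
def hyperSet {d : ℕ} (μ : TorusMeasure d) (Λ : Finset (Fin d → ℤ))
    (α : (Fin d → ℤ) → (Fin d → ℤ) → ℝ) : Set (Torus d) :=
  {x | ∀ m ∈ gammaSet μ Λ, ∀ n ∈ gammaSet μ Λ, m ≠ n →
    (∑ i, (m i - n i) • x i) + ((α m n : ℝ) : AddCircle (1 : ℝ)) = 0}

open ComplexConjugate in
section
variable {d : ℕ}

lemma torusChar_apply (m : Fin d → ℤ) (x : Torus d) :
    torusChar m x = ∏ i, fourier (m i) (x i) := rfl

lemma abs_torusChar (m : Fin d → ℤ) (x : Torus d) : ‖torusChar m x‖ = 1 := by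
  rw [torusChar_apply, norm_prod]
  simp [Circle.norm_coe]

lemma norm_torusChar_apply (m : Fin d → ℤ) (x : Torus d) : ‖torusChar m x‖ = 1 :=
  abs_torusChar m x

lemma torusChar_ne_zero (m : Fin d → ℤ) (x : Torus d) : torusChar m x ≠ 0 := by
  intro h
  have := abs_torusChar m x
  rw [h] at this; simp at this

lemma mul_torusChar (m n : Fin d → ℤ) : torusChar m * torusChar n = torusChar (m + n) := by
  ext x
  simp only [ContinuousMap.mul_apply, torusChar_apply, Pi.add_apply]
  rw [← Finset.prod_mul_distrib]
  exact Finset.prod_congr rfl fun i _ => (fourier_add).symm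

lemma star_torusChar (m : Fin d → ℤ) : star (torusChar m) = torusChar (-m) := by
  ext x
  simp only [ContinuousMap.star_apply, torusChar_apply, Pi.neg_apply]
  rw [show (star : ℂ → ℂ) = (starRingEnd ℂ) from rfl, map_prod]
  exact Finset.prod_congr rfl fun i _ => (fourier_neg).symm

lemma torusChar_zero : torusChar (0 : Fin d → ℤ) = 1 := by
  ext x
  simp [torusChar_apply, fourier_zero]

lemma torusChar_mul_neg (m : Fin d → ℤ) (x : Torus d) :
    torusChar m x * torusChar (-m) x = 1 := by
  have := congrFun (congrArg DFunLike.coe (mul_torusChar m (-m))) x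
  simpa [torusChar_zero] using this

lemma toCircle_sum {ι : Type*} (s : Finset ι) (f : ι → AddCircle (1:ℝ)) :
    AddCircle.toCircle (∑ i ∈ s, f i) = ∏ i ∈ s, AddCircle.toCircle (f i) := by
  classical
  induction s using Finset.induction with
  | empty =>
      simp only [Finset.sum_empty, Finset.prod_empty]
      have : ((AddCircle.toCircle (0 : AddCircle (1:ℝ))) : ℂ) = ((1 : Circle) : ℂ) := by
        simpa using (fourier_zero' (T := (1:ℝ)) (x := (0 : AddCircle (1:ℝ))))
      exact Subtype.coe_injective this
  | insert _ _ h ih => rw [Finset.sum_insert h, Finset.prod_insert h, AddCircle.toCircle_add, ih]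

lemma torusChar_eq_toCircle (m : Fin d → ℤ) (x : Torus d) :
    torusChar m x = (AddCircle.toCircle (∑ i, m i • x i) : ℂ) := by
  rw [torusChar_apply, toCircle_sum]
  have hc : ((∏ i, (m i • x i).toCircle : Circle) : ℂ) = ∏ i, (((m i • x i).toCircle : Circle) : ℂ) :=
    map_prod Circle.coeHom _ _
  rw [hc]
  refine Finset.prod_congr rfl fun i _ => ?_
  rw [fourier_apply]

lemma hyper_iff (m n : Fin d → ℤ) (a : ℝ) (x : Torus d) :
    ((∑ i, (m i - n i) • x i) + ((a : ℝ) : AddCircle (1 : ℝ)) = 0) ↔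
      torusChar (m - n) x * Complex.exp (2 * (π : ℂ) * Complex.I * (a : ℂ)) = 1 := by
  have h1 : torusChar (m - n) x = (AddCircle.toCircle (∑ i, (m i - n i) • x i) : ℂ) := by
    rw [torusChar_eq_toCircle]
    congr 1
  have h2 : ((AddCircle.toCircle ((a : ℝ) : AddCircle (1:ℝ))) : ℂ) =
      Complex.exp (2 * (π : ℂ) * Complex.I * (a : ℂ)) := by
    have := fourier_coe_apply' (T := (1:ℝ)) (n := 1) (x := a)
    simpa using this
  constructor
  · intro h
    have : AddCircle.toCircle ((∑ i, (m i - n i) • x i) + ((a : ℝ) : AddCircle (1:ℝ)))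
        = AddCircle.toCircle (0 : AddCircle (1:ℝ)) := by rw [h]
    rw [AddCircle.toCircle_add] at this
    have h0 : ((AddCircle.toCircle (0 : AddCircle (1:ℝ))) : ℂ) = 1 := by
      simpa using (fourier_zero' (T := (1:ℝ)) (x := (0 : AddCircle (1:ℝ))))
    calc torusChar (m - n) x * Complex.exp (2 * (π : ℂ) * Complex.I * (a : ℂ))
        = ((AddCircle.toCircle (∑ i, (m i - n i) • x i) * AddCircle.toCircle ((a:ℝ) : AddCircle (1:ℝ))) : ℂ) := by
          rw [h1, h2]
      _ = 1 := by rw [← Circle.coe_mul, this, h0]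
  · intro h
    apply AddCircle.injective_toCircle (one_ne_zero)
    rw [AddCircle.toCircle_add]
    apply Subtype.coe_injective
    push_cast
    rw [← h1, h2, h]
    simpa using (fourier_zero' (T := (1:ℝ)) (x := (0 : AddCircle (1:ℝ)))).symm

end

section Functional
variable {X : Type*} [TopologicalSpace X] [CompactSpace X]

lemma psi_im_zero (ψ : C(X,ℂ) →L[ℂ] ℂ) {N : ℝ} (hN : 0 < N) (h1 : ψ 1 = (N : ℂ))
    (hb : ∀ f, ‖ψ f‖ ≤ N * ‖f‖) {f : C(X,ℂ)} (hf : ∀ x, (f x).im = 0) :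
    (ψ f).im = 0 := by
  by_contra him
  set R := ‖f‖ with hR
  have key : ∀ t : ℝ, ‖ψ f‖ ^ 2 + 2 * t * N * (ψ f).im ≤ N ^ 2 * R ^ 2 := by
    intro t
    have hnorm : ‖f + ((t : ℂ) * Complex.I) • 1‖ ≤ Real.sqrt (R ^ 2 + t ^ 2) := by
      refine (ContinuousMap.norm_le _ (Real.sqrt_nonneg _)).mpr fun x => ?_
      have hfx : ‖f x‖ ≤ R := f.norm_coe_le_norm x
      refine Real.le_sqrt_of_sq_le ?_
      have h2 : ‖(f + ((t : ℂ) * Complex.I) • 1) x‖ ^ 2 = (f x).re ^ 2 + t ^ 2 := by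
        simp only [ContinuousMap.add_apply, ContinuousMap.smul_apply,
          ContinuousMap.one_apply, smul_eq_mul, mul_one]
        rw [Complex.sq_norm, Complex.normSq_apply]
        simp [hf x]; ring
      rw [h2]
      have h3 : (f x).re ^ 2 ≤ R ^ 2 := by
        have ha := Complex.abs_re_le_norm (f x)
        nlinarith [abs_nonneg (f x).re, _root_.sq_abs (f x).re, norm_nonneg (f x)]
      linarith
    have hψ : ψ (f + ((t : ℂ) * Complex.I) • 1) = ψ f + (t : ℂ) * Complex.I * N := by
      rw [map_add, ψ.map_smul, h1, smul_eq_mul]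
    have h5 : ‖ψ f + (t : ℂ) * Complex.I * (N : ℂ)‖ ≤ N * Real.sqrt (R ^ 2 + t ^ 2) := by
      rw [← hψ]
      exact (hb _).trans (by gcongr)
    have h6 : ‖ψ f + (t : ℂ) * Complex.I * (N : ℂ)‖ ^ 2 ≤ N ^ 2 * (R ^ 2 + t ^ 2) := by
      have h6' := mul_self_le_mul_self (norm_nonneg (ψ f + (t : ℂ) * Complex.I * (N:ℂ))) h5
      have h6'' : Real.sqrt (R^2+t^2) * Real.sqrt (R^2+t^2) = R^2 + t^2 :=
        Real.mul_self_sqrt (by positivity)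
      nlinarith [h6', h6'']
    have h7 : ‖ψ f + (t : ℂ) * Complex.I * (N : ℂ)‖ ^ 2
        = ‖ψ f‖ ^ 2 + 2 * t * N * (ψ f).im + t ^ 2 * N ^ 2 := by
      rw [Complex.sq_norm, Complex.sq_norm,
        Complex.normSq_apply, Complex.normSq_apply]
      simp only [Complex.add_re, Complex.add_im, Complex.mul_re, Complex.mul_im,
        Complex.I_re, Complex.I_im, Complex.ofReal_re, Complex.ofReal_im]
      ring
    nlinarith [h6, h7]
  have hb2 : 2 * N * (ψ f).im ≠ 0 := by
    intro h
    rcases mul_eq_zero.mp h with h' | h'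
    · rcases mul_eq_zero.mp h' with h'' | h''
      · norm_num at h''
      · exact absurd h'' hN.ne'
    · exact him h'
  have hkey := key ((N ^ 2 * R ^ 2 - ‖ψ f‖ ^ 2 + 1) / (2 * N * (ψ f).im))
  rw [show 2 * ((N ^ 2 * R ^ 2 - ‖ψ f‖ ^ 2 + 1) / (2 * N * (ψ f).im)) * N * (ψ f).im
      = N ^ 2 * R ^ 2 - ‖ψ f‖ ^ 2 + 1 by field_simp] at hkey
  linarith

lemma psi_re_nonneg (ψ : C(X,ℂ) →L[ℂ] ℂ) {N : ℝ} (hN : 0 < N) (h1 : ψ 1 = (N : ℂ))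
    (hb : ∀ f, ‖ψ f‖ ≤ N * ‖f‖) {f : C(X,ℂ)} (hf : ∀ x, (f x).im = 0 ∧ 0 ≤ (f x).re) :
    0 ≤ (ψ f).re := by
  set R := ‖f‖ with hR
  have hR0 : 0 ≤ R := norm_nonneg _
  have him : (ψ f).im = 0 := psi_im_zero ψ hN h1 hb fun x => (hf x).1
  set k : C(X,ℂ) := ((R : ℂ)) • 1 - f with hk
  have hknorm : ‖k‖ ≤ R := by
    refine (ContinuousMap.norm_le _ hR0).mpr fun x => ?_
    have h2 : f x = (((f x).re : ℝ) : ℂ) := Complex.ext rfl (by simp [(hf x).1])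
    have h3 : (f x).re ≤ R := le_trans (Complex.re_le_norm _) (f.norm_coe_le_norm x)
    have h4 : k x = (((R : ℝ) - (f x).re : ℝ) : ℂ) := by
      simp only [hk, ContinuousMap.sub_apply, ContinuousMap.smul_apply,
        ContinuousMap.one_apply, smul_eq_mul, mul_one]
      conv_lhs => rw [h2]
      push_cast; ring
    rw [h4, Complex.norm_real, Real.norm_eq_abs, _root_.abs_of_nonneg (by linarith [(hf x).2])]
    linarith [(hf x).2]
  have hψk : ψ k = (R : ℂ) * N - ψ f := by
    rw [hk, map_sub, ψ.map_smul, h1, smul_eq_mul]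
  have h4 : (ψ k).re ≤ ‖ψ k‖ := Complex.re_le_norm _
  have h5 : ‖ψ k‖ ≤ N * R := (hb k).trans (by nlinarith)
  have h6 : (ψ k).re = R * N - (ψ f).re := by rw [hψk]; simp
  linarith

lemma psi_re_mono (ψ : C(X,ℂ) →L[ℂ] ℂ) {N : ℝ} (hN : 0 < N) (h1 : ψ 1 = (N : ℂ))
    (hb : ∀ f, ‖ψ f‖ ≤ N * ‖f‖) {f g : C(X,ℂ)}
    (hfg : ∀ x, ((g - f) x).im = 0 ∧ 0 ≤ ((g - f) x).re) :
    (ψ f).re ≤ (ψ g).re := by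
  have h := psi_re_nonneg ψ hN h1 hb hfg
  rw [map_sub] at h
  simp only [Complex.sub_re] at h
  linarith

lemma psi_vanish (ψ : C(X,ℂ) →L[ℂ] ℂ) {N : ℝ} (hN : 0 < N) (h1 : ψ 1 = (N : ℂ))
    (hb : ∀ f, ‖ψ f‖ ≤ N * ‖f‖) {g : C(X,ℂ)}
    (hg : ∀ x, (g x).im = 0 ∧ 0 ≤ (g x).re) (hψg : ψ g = 0)
    {f : C(X,ℂ)} (hf : ∀ x, g x = 0 → f x = 0) : ψ f = 0 := by
  classical
  set F : C(X,ℂ) := ⟨fun x => ((‖f x‖ : ℝ) : ℂ),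
    Complex.continuous_ofReal.comp (f.continuous.norm)⟩ with hFdef
  have hFx : ∀ x, F x = ((‖f x‖ : ℝ) : ℂ) := fun _ => rfl
  have hFreal : ∀ x, (F x).im = 0 ∧ 0 ≤ (F x).re := fun x => by
    rw [hFx]; simp [norm_nonneg]
  have stepA : ∀ ε : ℝ, 0 < ε → (ψ F).re ≤ ε * N := by
    intro ε hε
    set M := ‖f‖ with hM
    have hM0 : 0 ≤ M := norm_nonneg _
    have hfxM : ∀ x, ‖f x‖ ≤ M := fun x => f.norm_coe_le_norm x
    set K : Set X := {x | ε ≤ ‖f x‖} with hK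
    have hKclosed : IsClosed K := isClosed_le continuous_const f.continuous.norm
    rcases Set.eq_empty_or_nonempty K with hKe | hKne
    · have hmono : (ψ F).re ≤ (ψ (((ε : ℂ)) • 1)).re := by
        refine psi_re_mono ψ hN h1 hb fun x => ?_
        have hx : ¬ ε ≤ ‖f x‖ := by
          intro h
          have : x ∈ K := h
          rw [hKe] at this
          exact Set.notMem_empty x this
        push_neg at hx
        constructor
        · simp [hFx]
        · simp only [ContinuousMap.sub_apply, ContinuousMap.smul_apply,
            ContinuousMap.one_apply, smul_eq_mul, mul_one, Complex.sub_re, hFx,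
            Complex.ofReal_re]
          linarith
      calc (ψ F).re ≤ (ψ (((ε : ℂ)) • 1)).re := hmono
        _ = ε * N := by rw [ψ.map_smul, h1, smul_eq_mul]; simp
    · have hKcpt : IsCompact K := hKclosed.isCompact
      obtain ⟨x₀, hx₀K, hx₀min⟩ := hKcpt.exists_isMinOn hKne
        (Complex.continuous_re.comp g.continuous).continuousOn
      have hx₀min' : ∀ x ∈ K, (g x₀).re ≤ (g x).re := fun x hx => hx₀min hx
      set δ := (g x₀).re with hδdef
      have hδpos : 0 < δ := by
        have hεx : ε ≤ ‖f x₀‖ := hx₀K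
        have hgne : g x₀ ≠ 0 := by
          intro h0
          have hf0 : f x₀ = 0 := hf x₀ h0
          rw [hf0] at hεx; simp at hεx; linarith
        rcases lt_or_eq_of_le (hg x₀).2 with h | h
        · exact h
        · exact absurd (Complex.ext h.symm (hg x₀).1) hgne
      set h : C(X,ℂ) := ((ε : ℂ)) • 1 + (((M / δ : ℝ) : ℂ)) • g - F with hhdef
      have hpos : 0 ≤ (ψ h).re := by
        refine psi_re_nonneg ψ hN h1 hb fun x => ?_
        have hRe : (h x).re = ε + (M / δ) * (g x).re - ‖f x‖ := by
          simp only [hhdef, ContinuousMap.sub_apply, ContinuousMap.add_apply,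
            ContinuousMap.smul_apply, ContinuousMap.one_apply, smul_eq_mul, mul_one,
            Complex.sub_re, Complex.add_re, Complex.mul_re, Complex.ofReal_re,
            Complex.ofReal_im, hFx]
          simp [(hg x).1]
        have hIm : (h x).im = 0 := by
          simp only [hhdef, ContinuousMap.sub_apply, ContinuousMap.add_apply,
            ContinuousMap.smul_apply, ContinuousMap.one_apply, smul_eq_mul, mul_one,
            Complex.sub_im, Complex.add_im, Complex.mul_im, Complex.ofReal_re,
            Complex.ofReal_im, hFx]
          simp [(hg x).1]
        refine ⟨hIm, ?_⟩
        rw [hRe]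
        by_cases hx : ε ≤ ‖f x‖
        · have hδx : δ ≤ (g x).re := hx₀min' x hx
          have : M ≤ (M / δ) * (g x).re := by
            calc M = (M / δ) * δ := by field_simp
              _ ≤ (M / δ) * (g x).re := by
                  apply mul_le_mul_of_nonneg_left hδx (by positivity)
          linarith [hfxM x]
        · push_neg at hx
          have : 0 ≤ (M / δ) * (g x).re := by
            apply mul_nonneg (by positivity) (hg x).2
          linarith
      have hψh : (ψ h).re = ε * N - (ψ F).re := by
        rw [hhdef]
        rw [map_sub, map_add, ψ.map_smul, ψ.map_smul, h1, hψg]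
        simp [Complex.sub_re, Complex.add_re]
      linarith [hpos, hψh ▸ hpos]
  have hF0 : 0 ≤ (ψ F).re := psi_re_nonneg ψ hN h1 hb hFreal
  have hFre : (ψ F).re = 0 := by
    rcases lt_or_eq_of_le hF0 with h | h
    · exfalso
      have := stepA ((ψ F).re / (2 * N)) (by positivity)
      rw [div_mul_eq_mul_div, mul_comm] at this
      have h2 : N * (ψ F).re / (2 * N) = (ψ F).re / 2 := by field_simp
      rw [h2] at this
      linarith
    · exact h.symm
  -- Step C : ‖ψ f‖ ≤ (ψ F).re
  by_cases hψf : ψ f = 0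
  · exact hψf
  set c : ℂ := (‖ψ f‖ : ℂ) / ψ f with hcdef
  have hc1 : c * ψ f = (‖ψ f‖ : ℂ) := div_mul_cancel₀ _ hψf
  have hcabs : ‖c‖ = 1 := by
    rw [hcdef, norm_div, Complex.norm_real, norm_norm]
    exact div_self (norm_ne_zero_iff.mpr hψf)
  set P : C(X,ℂ) := ⟨fun x => (((c * f x).re : ℝ) : ℂ),
    Complex.continuous_ofReal.comp (Complex.continuous_re.comp
      (continuous_const.mul f.continuous))⟩ with hPdef
  set Q : C(X,ℂ) := ⟨fun x => (((c * f x).im : ℝ) : ℂ),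
    Complex.continuous_ofReal.comp (Complex.continuous_im.comp
      (continuous_const.mul f.continuous))⟩ with hQdef
  have hPx : ∀ x, P x = (((c * f x).re : ℝ) : ℂ) := fun _ => rfl
  have hQx : ∀ x, Q x = (((c * f x).im : ℝ) : ℂ) := fun _ => rfl
  have hdecomp : c • f = P + Complex.I • Q := by
    ext x
    simp only [ContinuousMap.add_apply, ContinuousMap.smul_apply, smul_eq_mul]
    rw [hPx, hQx, mul_comm Complex.I _]
    exact (Complex.re_add_im _).symm
  have hψP_im : (ψ P).im = 0 := psi_im_zero ψ hN h1 hb fun x => by rw [hPx]; simp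
  have hψQ_im : (ψ Q).im = 0 := psi_im_zero ψ hN h1 hb fun x => by rw [hQx]; simp
  have hsum : (‖ψ f‖ : ℂ) = ψ P + Complex.I * ψ Q := by
    have h := congrArg ψ hdecomp
    rw [ψ.map_smul, map_add, ψ.map_smul, smul_eq_mul, smul_eq_mul, hc1] at h
    exact h
  have hQre : (ψ Q).re = 0 := by
    have h := congrArg Complex.im hsum
    simp only [Complex.add_im, Complex.mul_im, Complex.I_re, Complex.I_im,
      Complex.ofReal_im, hψP_im, hψQ_im] at h
    linarith
  have hψP : ψ P = (‖ψ f‖ : ℂ) := by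
    have hQ0 : ψ Q = 0 := Complex.ext hQre hψQ_im
    rw [hQ0, mul_zero, add_zero] at hsum
    exact hsum.symm
  have hmono : (ψ P).re ≤ (ψ F).re := by
    refine psi_re_mono ψ hN h1 hb fun x => ?_
    rw [ContinuousMap.sub_apply, hPx, hFx]
    constructor
    · simp
    · simp only [Complex.sub_re, Complex.ofReal_re]
      have : (c * f x).re ≤ ‖c * f x‖ := Complex.re_le_norm _
      rw [norm_mul, hcabs, one_mul] at this
      linarith
  have : ‖ψ f‖ ≤ 0 := by
    have := hψP ▸ hmono
    rw [hψP] at hmono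
    simp only [Complex.ofReal_re] at hmono
    linarith [hFre ▸ hmono]
  exact norm_le_zero_iff.mp this

lemma psi_re_part (ψ : C(X,ℂ) →L[ℂ] ℂ) {N : ℝ} (hN : 0 < N) (h1 : ψ 1 = (N : ℂ))
    (hb : ∀ f, ‖ψ f‖ ≤ N * ‖f‖) {w : C(X,ℂ)} (hw : ψ w = (N : ℂ)) :
    ψ ((1 : C(X,ℂ)) - (2 : ℂ)⁻¹ • (w + star w)) = 0 := by
  set P : C(X,ℂ) := ⟨fun x => (((w x).re : ℝ) : ℂ),
    Complex.continuous_ofReal.comp (Complex.continuous_re.comp w.continuous)⟩ with hPdef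
  set Q : C(X,ℂ) := ⟨fun x => (((w x).im : ℝ) : ℂ),
    Complex.continuous_ofReal.comp (Complex.continuous_im.comp w.continuous)⟩ with hQdef
  have hPx : ∀ x, P x = (((w x).re : ℝ) : ℂ) := fun _ => rfl
  have hQx : ∀ x, Q x = (((w x).im : ℝ) : ℂ) := fun _ => rfl
  have hdecomp : w = P + Complex.I • Q := by
    ext x
    simp only [ContinuousMap.add_apply, ContinuousMap.smul_apply, smul_eq_mul]
    rw [hPx, hQx, mul_comm Complex.I _]
    exact (Complex.re_add_im _).symm
  have hψP_im : (ψ P).im = 0 := psi_im_zero ψ hN h1 hb fun x => by rw [hPx]; simp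
  have hψQ_im : (ψ Q).im = 0 := psi_im_zero ψ hN h1 hb fun x => by rw [hQx]; simp
  have hsum : (N : ℂ) = ψ P + Complex.I * ψ Q := by
    have h := congrArg ψ hdecomp
    rw [map_add, ψ.map_smul, smul_eq_mul, hw] at h
    exact h
  have hQre : (ψ Q).re = 0 := by
    have h := congrArg Complex.im hsum
    simp only [Complex.add_im, Complex.mul_im, Complex.I_re, Complex.I_im,
      Complex.ofReal_im, hψP_im, hψQ_im] at h
    linarith
  have hψP : ψ P = (N : ℂ) := by
    have hQ0 : ψ Q = 0 := Complex.ext hQre hψQ_im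
    rw [hQ0, mul_zero, add_zero] at hsum
    exact hsum.symm
  have key : (1 : C(X,ℂ)) - (2 : ℂ)⁻¹ • (w + star w) = 1 - P := by
    congr 1
    ext x
    simp only [ContinuousMap.smul_apply, ContinuousMap.add_apply,
      ContinuousMap.star_apply, smul_eq_mul]
    rw [hPx, show (star (w x) : ℂ) = starRingEnd ℂ (w x) from rfl, Complex.add_conj]
    push_cast; ring
  rw [key, map_sub, h1, hψP, sub_self]

end Functional

section Helpers
variable {d : ℕ}

lemma norm_torusChar (m : Fin d → ℤ) : ‖torusChar m‖ = 1 := by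
  refine le_antisymm ((ContinuousMap.norm_le _ zero_le_one).mpr
    fun x => (norm_torusChar_apply m x).le) ?_
  have h := (torusChar m).norm_coe_le_norm (fun _ => (0 : AddCircle (1:ℝ)))
  rw [norm_torusChar_apply] at h
  exact h

lemma norm_coeff_le_minExtNorm (μ : TorusMeasure d) (Λ : Finset (Fin d → ℤ))
    {m : Fin d → ℤ} (hm : m ∈ Λ) : ‖mFourierCoeff μ m‖ ≤ minExtNorm μ Λ := by
  refine le_csInf ⟨‖μ‖, μ, fun _ _ => rfl, rfl⟩ ?_
  rintro b ⟨σ, hσ, rfl⟩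
  calc ‖mFourierCoeff μ m‖ = ‖σ (torusChar (-m))‖ := by rw [← hσ m hm]; rfl
    _ ≤ ‖σ‖ * ‖torusChar (-m)‖ := σ.le_opNorm _
    _ = ‖σ‖ := by rw [norm_torusChar, mul_one]

end Helpers


set_option maxHeartbeats 1000000 in
/-- **Theorem 1.2(b).** If `Γ(μ,Λ)` has at least two elements, then, with
`α_{m,n} ∈ ℝ/ℤ` defined by `e^{2πi α_{m,n}} = μ̂(m)/μ̂(n)` and
`S = ⋂_{m ≠ n ∈ Γ} {x : x·(m−n) + α_{m,n} ∈ ℤ}`, every minimal extrapolation of `μ` from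
`Λ` is supported in the closed set `S`; if `d = 1`, then `S` is finite, so every minimal
extrapolation is a discrete measure supported in `S`. -/
theorem minimalExtrapolation_of_gamma_nontrivial {d : ℕ} (μ : TorusMeasure d)
    (Λ : Finset (Fin d → ℤ)) (hΓ : (gammaSet μ Λ).Nontrivial)
    (α : (Fin d → ℤ) → (Fin d → ℤ) → ℝ)
    (hα : ∀ m ∈ gammaSet μ Λ, ∀ n ∈ gammaSet μ Λ, m ≠ n →
      Complex.exp (2 * (π : ℂ) * Complex.I * (α m n : ℂ)) =
        mFourierCoeff μ m / mFourierCoeff μ n) :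
    IsClosed (hyperSet μ Λ α) ∧
    (∀ ν : TorusMeasure d, IsMinimalExtrapolation μ Λ ν → SupportedIn ν (hyperSet μ Λ α)) ∧
    (d = 1 → (hyperSet μ Λ α).Finite) := by
  classical
  obtain ⟨m₀, hm₀, n₀, hn₀, hmn₀⟩ := hΓ
  have hcoeff_ne : ∀ m ∈ gammaSet μ Λ, mFourierCoeff μ m ≠ 0 := by
    intro m hm h0
    have h := hm.2
    rw [h0, norm_zero] at h
    have h2 := hα m₀ hm₀ n₀ hn₀ hmn₀
    have h3 : mFourierCoeff μ m₀ = 0 := by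
      have := hm₀.2
      rw [← h] at this
      exact norm_eq_zero.mp this
    rw [h3, zero_div] at h2
    exact Complex.exp_ne_zero _ h2
  have hε0 : 0 < minExtNorm μ Λ := by
    rw [← hm₀.2]
    exact norm_pos_iff.mpr (hcoeff_ne m₀ hm₀)
  refine ⟨?_, ?_, ?_⟩
  · -- closedness
    have heq : hyperSet μ Λ α = ⋂ m ∈ gammaSet μ Λ, ⋂ n ∈ gammaSet μ Λ, ⋂ (_ : m ≠ n),
        {x : Torus d | (∑ i, (m i - n i) • x i) + ((α m n : ℝ) : AddCircle (1:ℝ)) = 0} := by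
      ext x
      simp only [hyperSet, Set.mem_setOf_eq, Set.mem_iInter]
    rw [heq]
    refine isClosed_iInter fun m => isClosed_iInter fun _ => isClosed_iInter fun n =>
      isClosed_iInter fun _ => isClosed_iInter fun _ => ?_
    exact isClosed_eq (Continuous.add (continuous_finset_sum _ fun i _ =>
      (continuous_zsmul _).comp (continuous_apply i)) continuous_const) continuous_const
  · -- support
    intro ν hν f hfS
    obtain ⟨hext, hνnorm⟩ := hν
    set ε := minExtNorm μ Λ with hεdef
    set u : (Fin d → ℤ) → C(Torus d, ℂ) :=
      fun m => ((ε : ℂ) / mFourierCoeff μ m) • torusChar (-m) with hu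
    have hunorm : ∀ m ∈ gammaSet μ Λ, ∀ x, ‖u m x‖ = 1 := by
      intro m hm x
      rw [hu]
      simp only [ContinuousMap.smul_apply, smul_eq_mul, norm_mul, norm_div,
        Complex.norm_real, Real.norm_eq_abs, _root_.abs_of_nonneg hε0.le,
        norm_torusChar_apply, mul_one]
      rw [hm.2, ← hεdef, div_self hε0.ne']
    have hνu : ∀ m ∈ gammaSet μ Λ, ν (u m) = (ε : ℂ) := by
      intro m hm
      rw [hu]
      simp only
      rw [ν.map_smul, smul_eq_mul]
      have h : ν (torusChar (-m)) = mFourierCoeff μ m := hext m hm.1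
      rw [h, div_mul_cancel₀ _ (hcoeff_ne m hm)]
    set u₀ : C(Torus d, ℂ) := u m₀ with hu₀
    set ψ : C(Torus d,ℂ) →L[ℂ] ℂ :=
      ν.comp (ContinuousLinearMap.mul ℂ C(Torus d,ℂ) u₀) with hψdef
    have hψapp : ∀ h : C(Torus d,ℂ), ψ h = ν (u₀ * h) := fun _ => rfl
    have hu₀star : u₀ * star u₀ = 1 := by
      ext x
      simp only [ContinuousMap.mul_apply, ContinuousMap.star_apply,
        ContinuousMap.one_apply]
      rw [show (star (u₀ x) : ℂ) = starRingEnd ℂ (u₀ x) from rfl, Complex.mul_conj]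
      rw [Complex.normSq_eq_norm_sq, hunorm m₀ hm₀ x]
      norm_num
    have hψ1 : ψ 1 = (ε : ℂ) := by rw [hψapp, mul_one]; exact hνu m₀ hm₀
    have hψb : ∀ h : C(Torus d,ℂ), ‖ψ h‖ ≤ ε * ‖h‖ := by
      intro h
      rw [hψapp]
      calc ‖ν (u₀ * h)‖ ≤ ‖ν‖ * ‖u₀ * h‖ := ν.le_opNorm _
        _ ≤ ε * ‖h‖ := by
            rw [hνnorm]
            refine mul_le_mul_of_nonneg_left ?_ hε0.le
            refine (ContinuousMap.norm_le _ (norm_nonneg h)).mpr fun x => ?_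
            rw [ContinuousMap.mul_apply, norm_mul, hunorm m₀ hm₀ x, one_mul]
            exact h.norm_coe_le_norm x
    set Γfin : Finset (Fin d → ℤ) :=
      Λ.filter (fun m => ‖mFourierCoeff μ m‖ = minExtNorm μ Λ) with hΓfin
    have hΓfin_mem : ∀ m, m ∈ Γfin ↔ m ∈ gammaSet μ Λ := by
      intro m
      simp [hΓfin, Finset.mem_filter, gammaSet, Set.mem_setOf_eq]
    set gfun : (Fin d → ℤ) → C(Torus d, ℂ) :=
      fun n => (1 : C(Torus d,ℂ)) - (2:ℂ)⁻¹ • (star u₀ * u n + u₀ * star (u n)) with hgfun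
    have hwstar : ∀ n, u₀ * star (u n) = star (star u₀ * u n) := by
      intro n
      rw [star_mul, star_star, mul_comm]
    have hgx : ∀ n x, gfun n x = ((1 - ((starRingEnd ℂ) (u₀ x) * u n x).re : ℝ) : ℂ) := by
      intro n x
      rw [hgfun]
      simp only [ContinuousMap.sub_apply, ContinuousMap.one_apply,
        ContinuousMap.smul_apply, ContinuousMap.add_apply, ContinuousMap.mul_apply,
        ContinuousMap.star_apply, smul_eq_mul]
      rw [show (star (u₀ x) : ℂ) = starRingEnd ℂ (u₀ x) from rfl,
        show (star (u n x) : ℂ) = starRingEnd ℂ (u n x) from rfl]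
      rw [show u₀ x * (starRingEnd ℂ) (u n x)
          = (starRingEnd ℂ) ((starRingEnd ℂ) (u₀ x) * u n x) by
        rw [map_mul, Complex.conj_conj]]
      rw [Complex.add_conj]
      push_cast; ring
    have habsz : ∀ n ∈ gammaSet μ Λ, ∀ x : Torus d,
        ‖(starRingEnd ℂ) (u₀ x) * u n x‖ = 1 := by
      intro n hn x
      rw [norm_mul, RCLike.norm_conj, hunorm m₀ hm₀ x, hunorm n hn x, one_mul]
    have hgreal : ∀ n ∈ gammaSet μ Λ, ∀ x : Torus d,
        ((gfun n) x).im = 0 ∧ 0 ≤ ((gfun n) x).re := by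
      intro n hn x
      rw [hgx]
      refine ⟨by simp, ?_⟩
      simp only [Complex.ofReal_re]
      have h1 : ((starRingEnd ℂ) (u₀ x) * u n x).re ≤ 1 := by
        have := Complex.re_le_norm ((starRingEnd ℂ) (u₀ x) * u n x)
        rw [habsz n hn x] at this
        exact this
      linarith
    have hψg : ∀ n ∈ gammaSet μ Λ, ψ (gfun n) = 0 := by
      intro n hn
      have hw : ψ (star u₀ * u n) = (ε : ℂ) := by
        rw [hψapp]
        rw [show u₀ * (star u₀ * u n) = (u₀ * star u₀) * u n by ring, hu₀star, one_mul]
        exact hνu n hn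
      have := psi_re_part ψ hε0 hψ1 hψb hw
      rw [hgfun]
      simp only
      rw [hwstar n]
      exact this
    set G : C(Torus d, ℂ) := ∑ n ∈ Γfin, gfun n with hG
    have hGx : ∀ x : Torus d,
        G x = ((∑ n ∈ Γfin, (1 - ((starRingEnd ℂ) (u₀ x) * u n x).re) : ℝ) : ℂ) := by
      intro x
      have h1 : G x = ∑ n ∈ Γfin, gfun n x := by
        rw [hG]
        simp only [ContinuousMap.coe_sum, Finset.sum_apply]
      rw [h1, Complex.ofReal_sum]
      exact Finset.sum_congr rfl fun n _ => hgx n x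
    have hGreal : ∀ x : Torus d, (G x).im = 0 ∧ 0 ≤ (G x).re := by
      intro x
      rw [hGx]
      refine ⟨by simp, ?_⟩
      simp only [Complex.ofReal_re]
      refine Finset.sum_nonneg fun n hn => ?_
      have h2 := (hgreal n ((hΓfin_mem n).mp hn) x).2
      rw [hgx n x] at h2
      simpa using h2
    have hψG : ψ G = 0 := by
      rw [hG, map_sum]
      exact Finset.sum_eq_zero fun n hn => hψg n ((hΓfin_mem n).mp hn)
    -- pointwise: G x = 0 implies x ∈ hyperSet
    have hGzero : ∀ x : Torus d, G x = 0 → x ∈ hyperSet μ Λ α := by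
      intro x hx0
      have hsum0 : ∑ n ∈ Γfin, (1 - ((starRingEnd ℂ) (u₀ x) * u n x).re) = 0 := by
        have := hGx x
        rw [hx0] at this
        exact_mod_cast this.symm
      have hterm : ∀ n ∈ Γfin, (1 - ((starRingEnd ℂ) (u₀ x) * u n x).re) = 0 := by
        refine (Finset.sum_eq_zero_iff_of_nonneg fun n hn => ?_).mp hsum0
        have h2 := (hgreal n ((hΓfin_mem n).mp hn) x).2
        rw [hgx n x] at h2
        simpa using h2
      have hueq : ∀ n ∈ gammaSet μ Λ, u n x = u₀ x := by
        intro n hn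
        have h3 : ((starRingEnd ℂ) (u₀ x) * u n x).re = 1 := by
          have := hterm n ((hΓfin_mem n).mpr hn)
          linarith
        set z := (starRingEnd ℂ) (u₀ x) * u n x with hz
        have habs : ‖z‖ = 1 := by
          rw [hz]
          exact habsz n hn x
        have hnsq : Complex.normSq z = 1 := by
          rw [← Complex.sq_norm, habs]; norm_num
        have hzim : z.im = 0 := by
          rw [Complex.normSq_apply, h3] at hnsq
          nlinarith
        have hz1 : z = 1 := Complex.ext (by rw [h3]; rfl) (by rw [hzim]; rfl)
        have h4 : u₀ x * z = u₀ x := by rw [hz1, mul_one]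
        rw [hz, ← mul_assoc, Complex.mul_conj] at h4
        have h5 : Complex.normSq (u₀ x) = 1 := by
          rw [← Complex.sq_norm, hunorm m₀ hm₀ x]; norm_num
        rw [h5] at h4
        simpa using h4
      intro m hm n hn hmn
      rw [hyper_iff m n (α m n) x, hα m hm n hn hmn]
      have hAB : u m x = u n x := by rw [hueq m hm, hueq n hn]
      rw [hu] at hAB
      simp only [ContinuousMap.smul_apply, smul_eq_mul] at hAB
      have hsplit : torusChar (m - n) x * torusChar (-m) x = torusChar (-n) x := by
        have h6 := congrFun (congrArg DFunLike.coe (mul_torusChar (m - n) (-m))) x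
        rw [show m - n + -m = -n by ring] at h6
        simpa using h6
      have hA0 : torusChar (-m) x ≠ 0 := torusChar_ne_zero _ _
      have hεC : ((ε : ℝ) : ℂ) ≠ 0 := by
        exact_mod_cast Complex.ofReal_ne_zero.mpr hε0.ne'
      have hm0 : mFourierCoeff μ m ≠ 0 := hcoeff_ne m hm
      have hn0 : mFourierCoeff μ n ≠ 0 := hcoeff_ne n hn
      have h7 : (ε:ℂ) * torusChar (-m) x * mFourierCoeff μ n
          = (ε:ℂ) * (torusChar (m - n) x * torusChar (-m) x) * mFourierCoeff μ m := by
        rw [hsplit]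
        field_simp at hAB
        linear_combination (ε:ℂ) * hAB
      have h8 : ((ε:ℂ) * torusChar (-m) x) * mFourierCoeff μ n
          = ((ε:ℂ) * torusChar (-m) x) * (torusChar (m - n) x * mFourierCoeff μ m) := by
        linear_combination h7
      have hkey := mul_left_cancel₀ (mul_ne_zero hεC hA0) h8
      have h9 : torusChar (m - n) x * (mFourierCoeff μ m / mFourierCoeff μ n)
          = (torusChar (m - n) x * mFourierCoeff μ m) / mFourierCoeff μ n := by ring
      rw [h9, ← hkey, div_self hn0]
    -- conclude via psi_vanish
    have hfinal : ψ (star u₀ * f) = 0 := by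
      refine psi_vanish ψ hε0 hψ1 hψb hGreal hψG fun x hx0 => ?_
      have : f x = 0 := hfS x (hGzero x hx0)
      simp only [ContinuousMap.mul_apply, ContinuousMap.star_apply, this, mul_zero]
    rw [hψapp] at hfinal
    rw [show u₀ * (star u₀ * f) = (u₀ * star u₀) * f by ring, hu₀star, one_mul] at hfinal
    exact hfinal
  · -- finiteness
    intro hd
    subst hd
    have hk : m₀ 0 - n₀ 0 ≠ 0 := by
      intro h
      apply hmn₀
      funext i
      rw [Subsingleton.elim i 0]
      omega
    have hsub : hyperSet μ Λ α ⊆ (fun x : Torus 1 => x 0) ⁻¹'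
        {y : AddCircle (1:ℝ) | (m₀ 0 - n₀ 0) • y + ((α m₀ n₀ : ℝ) : AddCircle (1:ℝ)) = 0} := by
      intro x hx
      have h := hx m₀ hm₀ n₀ hn₀ hmn₀
      simpa [Fin.sum_univ_one] using h
    have hfib : {y : AddCircle (1:ℝ) |
        (m₀ 0 - n₀ 0) • y + ((α m₀ n₀ : ℝ) : AddCircle (1:ℝ)) = 0}.Finite := by
      set k := m₀ 0 - n₀ 0 with hkdef
      set c := ((α m₀ n₀ : ℝ) : AddCircle (1:ℝ)) with hcdef
      have htor : {y : AddCircle (1:ℝ) | k • y = 0}.Finite := by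
        have hsub2 : {y : AddCircle (1:ℝ) | k • y = 0} ⊆
            ⋃ n ∈ k.natAbs.divisors, {y : AddCircle (1:ℝ) | addOrderOf y = n} := by
          intro y hy
          have h1 : k.natAbs • y = 0 := by
            rcases Int.natAbs_eq k with h | h
            · have : k • y = 0 := hy
              rw [h, natCast_zsmul] at this
              exact this
            · have : k • y = 0 := hy
              rw [h, neg_zsmul, natCast_zsmul, neg_eq_zero] at this
              exact this
          have h2 : addOrderOf y ∣ k.natAbs := addOrderOf_dvd_of_nsmul_eq_zero h1
          exact Set.mem_biUnion (Nat.mem_divisors.mpr ⟨h2, Int.natAbs_ne_zero.mpr hk⟩) rfl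
        refine Set.Finite.subset ?_ hsub2
        refine Set.Finite.biUnion (Finset.finite_toSet _) fun n hn => ?_
        have hn' : n ∈ k.natAbs.divisors := Finset.mem_coe.mp hn
        exact AddCircle.finite_setOf_addOrderOf_eq (p := (1:ℝ)) (Nat.pos_of_mem_divisors hn')
      rcases Set.eq_empty_or_nonempty
          {y : AddCircle (1:ℝ) | k • y + c = 0} with he | ⟨y₀, hy₀⟩
      · rw [he]; exact Set.finite_empty
      · have hsub3 : {y : AddCircle (1:ℝ) | k • y + c = 0} ⊆
            (fun y => y - y₀) ⁻¹' {y : AddCircle (1:ℝ) | k • y = 0} := by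
          intro y hy
          have hy' : k • y + c = 0 := hy
          have hy₀' : k • y₀ + c = 0 := hy₀
          simp only [Set.mem_preimage, Set.mem_setOf_eq, smul_sub]
          rw [show k • y - k • y₀ = (k • y + c) - (k • y₀ + c) by abel, hy', hy₀', sub_zero]
        refine Set.Finite.subset (htor.preimage ?_) hsub3
        intro a _ b _ hab
        simpa using congrArg (· + y₀) hab
    refine Set.Finite.subset (hfib.preimage ?_) hsub
    intro a _ b _ hab
    funext i
    rw [Subsingleton.elim i 0]
    exact hab


end
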